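/- Let α > 0 and P_S > 0 be fixed, and for each α let t(α) > 0 be the unique solution of √(2P/π)·α·t·exp(−t²/(2P)) + α·(t² − P)·erf(t/√(2P)) = P_S. Then t(α) is strictly decreasing in α and t(α) → ∞ as α → 0⁺. -/

import Mathlib

open Real Filter Set intervalIntegral

/-- The Gauss error function. -/
noncomputable def erf (x : ℝ) : ℝ :=
  (2 / Real.sqrt π) * ∫ u in (0 : ℝ)..x, Real.exp (-u ^ 2)

lemma erf_hasDerivAt (x : ℝ) :
    HasDerivAt erf (2 / Real.sqrt π * Real.exp (-x ^ 2)) x := by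
  have hc : Continuous fun u : ℝ => Real.exp (-u ^ 2) := by continuity
  have h := integral_hasDerivAt_right (f := fun u : ℝ => Real.exp (-u ^ 2))
    (hc.intervalIntegrable 0 x) (hc.stronglyMeasurableAtFilter _ _) hc.continuousAt
  exact h.const_mul (2 / Real.sqrt π)

lemma erf_pos {x : ℝ} (hx : 0 < x) : 0 < erf x := by
  have hc : Continuous fun u : ℝ => Real.exp (-u ^ 2) := by continuity
  have h := intervalIntegral_pos_of_pos (f := fun u : ℝ => Real.exp (-u ^ 2))
    (hc.intervalIntegrable 0 x) (fun u => Real.exp_pos _) hx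
  have h2 : 0 < 2 / Real.sqrt π := by positivity
  exact mul_pos h2 h

lemma erf_zero' : erf 0 = 0 := by simp [erf]

noncomputable def Faux (P t : ℝ) : ℝ :=
  Real.sqrt (2 * P / π) * t * Real.exp (-t ^ 2 / (2 * P)) +
    (t ^ 2 - P) * erf (t / Real.sqrt (2 * P))

lemma Faux_hasDerivAt {P : ℝ} (hP : 0 < P) (t : ℝ) :
    HasDerivAt (Faux P) (2 * t * erf (t / Real.sqrt (2 * P))) t := by
  have h2P : (0:ℝ) < 2 * P := by linarith
  set s := Real.sqrt (2 * P) with hs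
  have hs0 : 0 < s := Real.sqrt_pos.2 h2P
  have hs2 : s ^ 2 = 2 * P := Real.sq_sqrt h2P.le
  have hsp : 0 < Real.sqrt π := Real.sqrt_pos.2 Real.pi_pos
  have hq : Real.sqrt (2 * P / π) = s / Real.sqrt π := Real.sqrt_div h2P.le π
  have hE : -(t / s) ^ 2 = -t ^ 2 / (2 * P) := by
    rw [div_pow, hs2]; ring
  have h1 : HasDerivAt (fun u : ℝ => -u ^ 2 / (2 * P)) (-(2 * t) / (2 * P)) t := by
    have := ((hasDerivAt_pow 2 t).neg).div_const (2 * P)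
    simpa using this
  have hexp := h1.exp
  have hf1 : HasDerivAt (fun u : ℝ => Real.sqrt (2 * P / π) * u)
      (Real.sqrt (2 * P / π)) t := by
    simpa using (hasDerivAt_id t).const_mul (Real.sqrt (2 * P / π))
  have ht1 := hf1.mul hexp
  have herf : HasDerivAt (fun u : ℝ => erf (u / s))
      ((2 / Real.sqrt π * Real.exp (-(t / s) ^ 2)) * (1 / s)) t := by
    have := (erf_hasDerivAt (t / s)).comp t ((hasDerivAt_id t).div_const s)
    simpa [Function.comp_def] using this
  have hpoly : HasDerivAt (fun u : ℝ => u ^ 2 - P) (2 * t) t := by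
    simpa using (hasDerivAt_pow 2 t).sub_const P
  have ht2 := hpoly.mul herf
  have h := ht1.add ht2
  have hfun : HasDerivAt (Faux P)
      (Real.sqrt (2 * P / π) * Real.exp (-t ^ 2 / (2 * P)) +
        Real.sqrt (2 * P / π) * t * (Real.exp (-t ^ 2 / (2 * P)) * (-(2 * t) / (2 * P))) +
        ((2 * t) * erf (t / s) +
          (t ^ 2 - P) * ((2 / Real.sqrt π * Real.exp (-(t / s) ^ 2)) * (1 / s)))) t := h
  convert hfun using 1
  rw [hE, hq]
  have hP' : P = s ^ 2 / 2 := by linarith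
  rw [hP']
  field_simp
  ring

lemma Faux_strictMonoOn {P : ℝ} (hP : 0 < P) : StrictMonoOn (Faux P) (Set.Ici 0) := by
  apply strictMonoOn_of_deriv_pos (convex_Ici 0)
  · exact fun x _ => ((Faux_hasDerivAt hP x).differentiableAt).continuousAt.continuousWithinAt
  · intro x hx
    rw [interior_Ici] at hx
    rw [(Faux_hasDerivAt hP x).deriv]
    have hs0 : 0 < Real.sqrt (2 * P) := Real.sqrt_pos.2 (by linarith)
    have hx' : (0:ℝ) < x := hx
    exact mul_pos (by linarith) (erf_pos (div_pos hx hs0))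

lemma Faux_zero {P : ℝ} : Faux P 0 = 0 := by simp [Faux, erf_zero']

lemma Faux_pos {P : ℝ} (hP : 0 < P) {t : ℝ} (ht : 0 < t) : 0 < Faux P t := by
  have := Faux_strictMonoOn hP (Set.self_mem_Ici) (Set.mem_Ici.2 ht.le) ht
  rwa [Faux_zero] at this

/-- Remark 1: the amplitude threshold x_th(α) defined by the power-constraint
equation (40) is strictly decreasing in α and tends to ∞ as α → 0⁺. -/
theorem threshold_decreasing_in_alpha (P PS : ℝ) (hP : 0 < P) (hPS : 0 < PS)
    (tα : ℝ → ℝ)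
    (htα : ∀ α : ℝ, 0 < α → 0 < tα α ∧
      Real.sqrt (2 * P / π) * α * tα α * Real.exp (-(tα α) ^ 2 / (2 * P)) +
        α * ((tα α) ^ 2 - P) * erf (tα α / Real.sqrt (2 * P)) = PS) :
    StrictAntiOn tα (Set.Ioi 0) ∧
      Tendsto tα (nhdsWithin 0 (Set.Ioi 0)) atTop := by
  have key : ∀ α : ℝ, 0 < α → Faux P (tα α) = PS / α := by
    intro α hα
    have h := (htα α hα).2
    have : α * Faux P (tα α) = PS := by rw [← h]; unfold Faux; ring
    field_simp [hα.ne'] at this ⊢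
    linarith
  have hmono := Faux_strictMonoOn hP
  constructor
  · intro a ha b hb hab
    have ha' : (0:ℝ) < a := ha
    have hb' : (0:ℝ) < b := hb
    have hlt : Faux P (tα b) < Faux P (tα a) := by
      rw [key a ha', key b hb']
      exact div_lt_div_of_pos_left hPS ha' hab
    exact (hmono.lt_iff_lt (Set.mem_Ici.2 (htα b hb').1.le)
      (Set.mem_Ici.2 (htα a ha').1.le)).1 hlt
  · rw [tendsto_atTop]
    intro M
    set M' : ℝ := max M 1 with hM'
    have hM'0 : 0 < M' := lt_of_lt_of_le one_pos (le_max_right _ _)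
    have hF : 0 < Faux P M' := Faux_pos hP hM'0
    have hmem : Set.Ioo (0:ℝ) (PS / Faux P M') ∈ nhdsWithin 0 (Set.Ioi 0) := by
      apply Ioo_mem_nhdsGT_of_mem
      exact ⟨le_refl 0, by positivity⟩
    filter_upwards [hmem] with α hα
    obtain ⟨hα0, hαδ⟩ := hα
    have hgt : Faux P M' < Faux P (tα α) := by
      rw [key α hα0]
      rw [lt_div_iff₀ hα0]
      calc Faux P M' * α < Faux P M' * (PS / Faux P M') := by
            exact mul_lt_mul_of_pos_left hαδ hF
        _ = PS := by field_simp
    have : M' < tα α := by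
      by_contra hle
      push_neg at hle
      have := hmono.le_iff_le (Set.mem_Ici.2 (htα α hα0).1.le) (Set.mem_Ici.2 hM'0.le)
      have h2 : Faux P (tα α) ≤ Faux P M' := this.2 hle
      linarith
    exact le_trans (le_max_left M 1) this.le
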